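/- Let E be a reflexive real Banach space and f : E → (−∞,+∞] a bounded, uniformly Fréchet differentiable, totally convex function on bounded subsets of E, with ∇f* bounded on bounded subsets of dom f* = E*. Let C be a nonempty subset of int(dom f) and T_1,…,T_N : C → C Bregman strongly nonexpansive mappings with ∩_{i=1}^N F̂(T_i) ≠ ∅. Then T = T_N ∘ T_{N−1} ∘ ⋯ ∘ T_1 is a Bregman strongly nonexpansive mapping and F̂(T) = ∩_{i=1}^N F̂(T_i). -/

import Mathlib

open Filter Bornology Set Topology

noncomputable section

variable {E : Type*}

/-- `f' : E →L[ℝ] ℝ` is the Gâteaux derivative (gradient) of `f` at `x`. -/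
def HasGateauxDerivAt [NormedAddCommGroup E] [NormedSpace ℝ E]
    (f : E → ℝ) (f' : E →L[ℝ] ℝ) (x : E) : Prop :=
  ∀ y : E, Tendsto (fun t : ℝ => (f (x + t • y) - f x) / t) (𝓝[≠] (0:ℝ)) (𝓝 (f' y))

/-- The Bregman distance `D_f(x,y) = f x − f y − ⟨∇f y, x − y⟩` with respect to `f`,
whose Gâteaux gradient is `gradf`. -/
def Df [NormedAddCommGroup E] [NormedSpace ℝ E]
    (f : E → ℝ) (gradf : E → E →L[ℝ] ℝ) (x y : E) : ℝ :=
  f x - f y - gradf y (x - y)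

/-- A real normed space is reflexive: the canonical embedding into its double dual
is surjective. -/
def IsReflexive (E : Type*) [NormedAddCommGroup E] [NormedSpace ℝ E] : Prop :=
  Function.Surjective (NormedSpace.inclusionInDoubleDual ℝ E)

/-- `x n` converges weakly to `p` in `E`. -/
def WeakTendsto [NormedAddCommGroup E] [NormedSpace ℝ E] (x : ℕ → E) (p : E) : Prop :=
  ∀ ψ : E →L[ℝ] ℝ, Tendsto (fun n => ψ (x n)) atTop (𝓝 (ψ p))

/-- The set `F̂(T)` of asymptotic fixed points of `T` on `C`: points `p ∈ C` for which `C`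
contains a sequence converging weakly to `p` whose displacements `‖x n − T (x n)‖` tend
to `0`. -/
def AsympFixedPoints [NormedAddCommGroup E] [NormedSpace ℝ E]
    (C : Set E) (T : E → E) : Set E :=
  {p | p ∈ C ∧ ∃ x : ℕ → E, (∀ n, x n ∈ C) ∧ WeakTendsto x p ∧
    Tendsto (fun n => ‖x n - T (x n)‖) atTop (𝓝 0)}

/-- The fixed point set `F(T) = {x ∈ C : T x = x}`. -/
def FixSet (C : Set E) (T : E → E) : Set E := {u ∈ C | T u = u}

/-- `T` is Bregman strongly nonexpansive with respect to `f` (with gradient `gradf`)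
and `F̂(T)`. -/
def BregmanStronglyNonexpansive [NormedAddCommGroup E] [NormedSpace ℝ E]
    (f : E → ℝ) (gradf : E → E →L[ℝ] ℝ) (C : Set E) (T : E → E) : Prop :=
  (∀ x ∈ C, ∀ p ∈ AsympFixedPoints C T, Df f gradf p (T x) ≤ Df f gradf p x) ∧
  ∀ x : ℕ → E, (∀ n, x n ∈ C) → IsBounded (Set.range x) →
    ∀ p ∈ AsympFixedPoints C T,
      Tendsto (fun n => Df f gradf p (x n) - Df f gradf p (T (x n))) atTop (𝓝 0) →
      Tendsto (fun n => Df f gradf (x n) (T (x n))) atTop (𝓝 0)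

/-- `f` is bounded on bounded subsets of `E`. -/
def BoundedOnBounded [NormedAddCommGroup E] [NormedSpace ℝ E] (f : E → ℝ) : Prop :=
  ∀ s : Set E, IsBounded s → IsBounded (f '' s)

/-- `f` is uniformly Fréchet differentiable on bounded subsets of `E`: the difference
quotients converge to `⟨∇f x, y⟩` uniformly for `x` in a bounded set and `‖y‖ = 1`. -/
def UnifFrechetDiffOnBounded [NormedAddCommGroup E] [NormedSpace ℝ E]
    (f : E → ℝ) (gradf : E → E →L[ℝ] ℝ) : Prop :=
  ∀ s : Set E, IsBounded s → ∀ ε > (0:ℝ), ∃ δ > (0:ℝ), ∀ x ∈ s, ∀ y : E, ‖y‖ = 1 →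
    ∀ t : ℝ, t ≠ 0 → |t| < δ → |(f (x + t • y) - f x) / t - gradf x y| < ε

/-- `f` is totally convex on bounded subsets of `E`: the modulus of total convexity
`ν_f(B,t) = inf {D_f(y,x) : x ∈ B, ‖y − x‖ = t}` is positive for every nonempty bounded
`B` and `t > 0`. -/
def TotallyConvexOnBounded [NormedAddCommGroup E] [NormedSpace ℝ E]
    (f : E → ℝ) (gradf : E → E →L[ℝ] ℝ) : Prop :=
  ∀ B : Set E, B.Nonempty → IsBounded B → ∀ t > (0:ℝ), ∃ c > (0:ℝ),
    ∀ x ∈ B, ∀ y : E, ‖y - x‖ = t → c ≤ Df f gradf y x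

/-- `z` is the Bregman projection `proj_C^f(x)` of `x` onto `C`: `z ∈ C` and `z` minimizes
`D_f(·, x)` over `C`. -/
def IsBregmanProj [NormedAddCommGroup E] [NormedSpace ℝ E]
    (f : E → ℝ) (gradf : E → E →L[ℝ] ℝ) (C : Set E) (x z : E) : Prop :=
  z ∈ C ∧ ∀ w ∈ C, Df f gradf z x ≤ Df f gradf w x

section BregmanHelpers
variable [NormedAddCommGroup E] [NormedSpace ℝ E]
variable {f : E → ℝ} {gradf : E → E →L[ℝ] ℝ}

omit [NormedAddCommGroup E] [NormedSpace ℝ E] in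
/-- Partial composition `T_{k} ∘ ⋯ ∘ T_1`. -/
def compPartial (N : ℕ) (T : Fin N → E → E) : ℕ → E → E
  | 0 => id
  | (k+1) => fun v => if h : k < N then T ⟨k, h⟩ (compPartial N T k v) else compPartial N T k v

omit [NormedAddCommGroup E] [NormedSpace ℝ E] in
lemma compPartial_succ_of_lt {N : ℕ} (T : Fin N → E → E) {k : ℕ} (h : k < N) (v : E) :
    compPartial N T (k+1) v = T ⟨k, h⟩ (compPartial N T k v) := by
  simp [compPartial, h]

omit [NormedAddCommGroup E] [NormedSpace ℝ E] in
lemma foldl_eq_compPartial {N : ℕ} (T : Fin N → E → E) (v : E) :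
    Fin.foldl N (fun w i => T i w) v = compPartial N T N v := by
  suffices H : ∀ m (h : m ≤ N), Fin.foldl m (fun w (i : Fin m) => T (Fin.castLE h i) w) v
      = compPartial N T m v from by
    have := H N le_rfl
    simpa using this
  intro m h
  induction m with
  | zero => simp [compPartial]
  | succ m ih =>
      rw [Fin.foldl_succ_last, compPartial_succ_of_lt T (by omega),
        ← ih (by omega)]
      rfl

/-- The gradient inequality for a convex Gâteaux differentiable function. -/
lemma grad_ineq (hconv : ConvexOn ℝ Set.univ f)
    (hg : ∀ u : E, HasGateauxDerivAt f (gradf u) u) (x y : E) :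
    f y + gradf y (x - y) ≤ f x := by
  have h := (hg y (x - y)).mono_left
    (nhdsWithin_mono _ (fun t ht => by exact ne_of_gt ht : Set.Ioi (0:ℝ) ⊆ {(0:ℝ)}ᶜ))
  have hle : ∀ᶠ t : ℝ in 𝓝[>] (0:ℝ),
      (f (y + t • (x - y)) - f y) / t ≤ f x - f y := by
    filter_upwards [Ioo_mem_nhdsGT (by norm_num : (0:ℝ) < 1)] with t ht
    obtain ⟨ht0, ht1⟩ := ht
    have hc := hconv.2 (Set.mem_univ y) (Set.mem_univ x) (by linarith : (0:ℝ) ≤ 1 - t)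
      (le_of_lt ht0) (by ring)
    have : y + t • (x - y) = (1 - t) • y + t • x := by
      simp [smul_sub, sub_smul]; abel
    rw [div_le_iff₀ ht0, this]
    simp only [smul_eq_mul] at hc
    nlinarith [hc]
  have := le_of_tendsto h hle
  linarith

lemma Df_nonneg (hconv : ConvexOn ℝ Set.univ f)
    (hg : ∀ u : E, HasGateauxDerivAt f (gradf u) u) (x y : E) :
    0 ≤ Df f gradf x y := by
  have := grad_ineq hconv hg x y
  simp only [Df]; linarith

lemma Df_self (x : E) : Df f gradf x x = 0 := by simp [Df]

/-- Convexity of the Bregman distance in its first variable. -/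
lemma Df_convex_left (hconv : ConvexOn ℝ Set.univ f) {a b : ℝ} (ha : 0 ≤ a) (hb : 0 ≤ b)
    (hab : a + b = 1) (w v x : E) :
    Df f gradf (a • w + b • v) x ≤ a * Df f gradf w x + b * Df f gradf v x := by
  have hc := hconv.2 (Set.mem_univ w) (Set.mem_univ v) ha hb hab
  simp only [smul_eq_mul] at hc
  have hlin : gradf x (a • w + b • v - x) =
      a * gradf x (w - x) + b * gradf x (v - x) := by
    have : a • w + b • v - x = a • (w - x) + b • (v - x) := by
      rw [smul_sub, smul_sub]
      rw [show a • w - a • x + (b • v - b • x) = a • w + b • v - (a • x + b • x) by abel,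
        ← add_smul, hab, one_smul]
    rw [this, map_add, map_smul, map_smul]; rfl
  simp only [Df, hlin]
  have h1 : a * f x + b * f x = f x := by rw [← add_mul, hab, one_mul]
  linarith [hc, h1]

end BregmanHelpers
section AnalyticHelpers
variable [NormedAddCommGroup E] [NormedSpace ℝ E]
variable {f : E → ℝ} {gradf : E → E →L[ℝ] ℝ}

/-- A bound on the operator norm from bounds on unit vectors. -/
lemma opNorm_le_of_unit (ψ : E →L[ℝ] ℝ) {c : ℝ} (hc : 0 ≤ c)
    (h : ∀ u : E, ‖u‖ = 1 → ψ u ≤ c) : ‖ψ‖ ≤ c := by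
  refine ψ.opNorm_le_bound hc fun u => ?_
  rcases eq_or_ne u 0 with rfl | hu
  · simp
  have hn : ‖u‖ ≠ 0 := norm_ne_zero_iff.2 hu
  have h1 : ‖(‖u‖⁻¹ • u : E)‖ = 1 := by
    rw [norm_smul, Real.norm_eq_abs, abs_inv, abs_norm, inv_mul_cancel₀ hn]
  have h2 := h _ h1
  have h3 := h (-(‖u‖⁻¹ • u)) (by rwa [norm_neg])
  rw [map_neg] at h3
  have habs : |ψ (‖u‖⁻¹ • u)| ≤ c := abs_le.2 ⟨by linarith, h2⟩
  have he : ψ u = ‖u‖ * ψ (‖u‖⁻¹ • u) := by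
    rw [map_smul, smul_eq_mul, ← mul_assoc, mul_inv_cancel₀ hn, one_mul]
  rw [Real.norm_eq_abs, he, abs_mul, abs_of_nonneg (norm_nonneg u), mul_comm]
  exact mul_le_mul_of_nonneg_right habs (norm_nonneg u)

/-- Absolute bound of `f` on closed balls. -/
lemma abs_bound_of_bddOnBounded (hbdd : BoundedOnBounded f) (r : ℝ) :
    ∃ M ≥ 0, ∀ z ∈ Metric.closedBall (0:E) r, |f z| ≤ M := by
  obtain ⟨M, hM⟩ := (Metric.isBounded_iff_subset_closedBall (0:ℝ)).1
    (hbdd _ (Metric.isBounded_closedBall (x := (0:E)) (r := r)))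
  refine ⟨max M 0, le_max_right _ _, fun z hz => ?_⟩
  have := hM (Set.mem_image_of_mem f hz)
  rw [Metric.mem_closedBall, Real.dist_eq, sub_zero] at this
  exact this.trans (le_max_left _ _)

/-- Convex functions bounded on bounded sets are Lipschitz on closed balls. -/
lemma lipschitz_on_ball (hconv : ConvexOn ℝ Set.univ f) (hbdd : BoundedOnBounded f)
    (r : ℝ) : ∃ L ≥ 0, ∀ x ∈ Metric.closedBall (0:E) r, ∀ y ∈ Metric.closedBall (0:E) r,
      |f x - f y| ≤ L * ‖x - y‖ := by
  obtain ⟨M, hM0, hM⟩ := abs_bound_of_bddOnBounded hbdd (r + 1)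
  refine ⟨2 * M, by positivity, ?_⟩
  have key : ∀ x ∈ Metric.closedBall (0:E) r, ∀ y ∈ Metric.closedBall (0:E) r,
      f y - f x ≤ 2 * M * ‖y - x‖ := by
    intro x hx y hy
    rcases eq_or_ne y x with rfl | hne
    · simp
    set s : ℝ := ‖y - x‖ with hs_def
    have hs : 0 < s := norm_pos_iff.2 (sub_ne_zero.2 hne)
    have hs1 : (0:ℝ) < s + 1 := by linarith
    have hz : y + s⁻¹ • (y - x) ∈ Metric.closedBall (0:E) (r + 1) := by
      rw [Metric.mem_closedBall, dist_zero_right]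
      have : ‖s⁻¹ • (y - x)‖ = 1 := by
        rw [norm_smul, Real.norm_eq_abs, abs_inv, abs_of_pos hs, inv_mul_cancel₀ hs.ne']
      calc ‖y + s⁻¹ • (y - x)‖ ≤ ‖y‖ + ‖s⁻¹ • (y - x)‖ := norm_add_le _ _
        _ ≤ r + 1 := by
            rw [this]
            have := Metric.mem_closedBall.1 hy
            rw [dist_zero_right] at this
            linarith
    have hkey : (1/(s+1)) • x + (s/(s+1)) • (y + s⁻¹ • (y - x)) = y := by
      have h1 : (s/(s+1)) • (y + s⁻¹ • (y - x)) =
          (s/(s+1)) • y + (1/(s+1)) • (y - x) := by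
        rw [smul_add, smul_smul]
        congr 2
        field_simp
      rw [h1, smul_sub]
      rw [show (1/(s+1)) • x + ((s/(s+1)) • y + ((1/(s+1)) • y - (1/(s+1)) • x))
          = (s/(s+1) + 1/(s+1)) • y by rw [add_smul]; abel]
      rw [← add_div, div_self hs1.ne', one_smul]
    have hc := hconv.2 (Set.mem_univ x) (Set.mem_univ (y + s⁻¹ • (y - x)))
      (by positivity : (0:ℝ) ≤ 1/(s+1)) (by positivity : (0:ℝ) ≤ s/(s+1))
      (by rw [← add_div, add_comm, div_self hs1.ne'])
    rw [hkey] at hc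
    simp only [smul_eq_mul] at hc
    have hb1 : s/(s+1) ≤ s := by
      rw [div_le_iff₀ hs1]; nlinarith
    have hfx : |f x| ≤ M := hM x (Metric.closedBall_subset_closedBall (by linarith) hx)
    have hfz : |f (y + s⁻¹ • (y - x))| ≤ M := hM _ hz
    have h2 : f y - f x ≤ (s/(s+1)) * (f (y + s⁻¹ • (y - x)) - f x) := by
      have h3 : (1:ℝ) - s/(s+1) = 1/(s+1) := by field_simp; ring
      have hc' : f y ≤ (1 - s/(s+1)) * f x + s/(s+1) * f (y + s⁻¹ • (y - x)) := by
        rw [h3]; exact hc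
      have hexp : (1 - s/(s+1)) * f x = f x - s/(s+1) * f x := by ring
      have hgoal : s/(s+1) * (f (y + s⁻¹ • (y - x)) - f x)
          = s/(s+1) * f (y + s⁻¹ • (y - x)) - s/(s+1) * f x := by ring
      linarith [hc', hexp, hgoal]
    have h4 : f (y + s⁻¹ • (y - x)) - f x ≤ 2 * M := by
      cases' abs_le.1 hfx with hfx1 hfx2
      cases' abs_le.1 hfz with hfz1 hfz2
      linarith
    have hb0 : (0:ℝ) ≤ s/(s+1) := by positivity
    calc f y - f x ≤ (s/(s+1)) * (f (y + s⁻¹ • (y - x)) - f x) := h2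
      _ ≤ s * (2 * M) := by
          have e1 := mul_le_mul_of_nonneg_left h4 hb0
          have e2 := mul_le_mul_of_nonneg_right hb1 (by positivity : (0:ℝ) ≤ 2*M)
          linarith
      _ = 2 * M * ‖y - x‖ := by rw [← hs_def]; ring
  intro x hx y hy
  rw [abs_sub_le_iff]
  constructor
  · exact key y hy x hx
  · have := key x hx y hy
    rwa [norm_sub_rev y x] at this
end AnalyticHelpers
section AnalyticHelpers2
variable [NormedAddCommGroup E] [NormedSpace ℝ E]
variable {f : E → ℝ} {gradf : E → E →L[ℝ] ℝ}

/-- The gradient is bounded on closed balls. -/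
lemma grad_bound (hconv : ConvexOn ℝ Set.univ f)
    (hg : ∀ u : E, HasGateauxDerivAt f (gradf u) u) (hbdd : BoundedOnBounded f)
    (r : ℝ) : ∃ L ≥ 0, ∀ y ∈ Metric.closedBall (0:E) r, ‖gradf y‖ ≤ L := by
  obtain ⟨L, hL0, hL⟩ := lipschitz_on_ball hconv hbdd (r + 1)
  refine ⟨L, hL0, fun y hy => ?_⟩
  have hy' : y ∈ Metric.closedBall (0:E) (r+1) :=
    Metric.closedBall_subset_closedBall (by linarith) hy
  refine opNorm_le_of_unit _ hL0 fun u hu => ?_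
  have h1 : gradf y u ≤ f (y + u) - f y := by
    have := grad_ineq hconv hg (y + u) y
    rw [add_sub_cancel_left] at this
    linarith
  have hyu : y + u ∈ Metric.closedBall (0:E) (r+1) := by
    rw [Metric.mem_closedBall, dist_zero_right]
    have := Metric.mem_closedBall.1 hy
    rw [dist_zero_right] at this
    calc ‖y + u‖ ≤ ‖y‖ + ‖u‖ := norm_add_le _ _
      _ ≤ r + 1 := by rw [hu]; linarith
  have h2 : |f (y + u) - f y| ≤ L * ‖(y + u) - y‖ := hL _ hyu _ hy'
  rw [add_sub_cancel_left, hu, mul_one] at h2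
  have := (abs_le.1 h2).2
  linarith

/-- The gradient is uniformly continuous on closed balls. -/
lemma grad_unifCont (hconv : ConvexOn ℝ Set.univ f)
    (hg : ∀ u : E, HasGateauxDerivAt f (gradf u) u) (hbdd : BoundedOnBounded f)
    (hufd : UnifFrechetDiffOnBounded f gradf) (r : ℝ) :
    ∀ ε > (0:ℝ), ∃ δ > (0:ℝ), ∀ x ∈ Metric.closedBall (0:E) r,
      ∀ y ∈ Metric.closedBall (0:E) r, ‖x - y‖ < δ → ‖gradf x - gradf y‖ ≤ ε := by
  intro ε hε
  obtain ⟨L, hL0, hL⟩ := lipschitz_on_ball hconv hbdd (r + 1)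
  obtain ⟨δ₀, hδ₀, hd⟩ := hufd (Metric.closedBall (0:E) r) Metric.isBounded_closedBall
    (ε/4) (by linarith)
  set t : ℝ := min (δ₀/2) 1 with ht_def
  have ht0 : 0 < t := lt_min (by linarith) one_pos
  have ht1 : t ≤ 1 := min_le_right _ _
  have htδ : |t| < δ₀ := by
    rw [abs_of_pos ht0]
    calc t ≤ δ₀/2 := min_le_left _ _
      _ < δ₀ := by linarith
  refine ⟨ε * t / (4 * L + 4), by positivity, fun x hx y hy hxy => ?_⟩
  have key : ∀ u : E, ‖u‖ = 1 → (gradf x - gradf y) u ≤ ε := by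
    intro u hu
    have hdx := hd x hx u hu t ht0.ne' htδ
    have hdy := hd y hy u hu t ht0.ne' htδ
    have hxtu : x + t • u ∈ Metric.closedBall (0:E) (r+1) := by
      rw [Metric.mem_closedBall, dist_zero_right]
      have hxr := Metric.mem_closedBall.1 hx
      rw [dist_zero_right] at hxr
      calc ‖x + t • u‖ ≤ ‖x‖ + ‖t • u‖ := norm_add_le _ _
        _ ≤ r + 1 := by
            rw [norm_smul, Real.norm_eq_abs, hu, mul_one, abs_of_pos ht0]
            linarith
    have hytu : y + t • u ∈ Metric.closedBall (0:E) (r+1) := by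
      rw [Metric.mem_closedBall, dist_zero_right]
      have hyr := Metric.mem_closedBall.1 hy
      rw [dist_zero_right] at hyr
      calc ‖y + t • u‖ ≤ ‖y‖ + ‖t • u‖ := norm_add_le _ _
        _ ≤ r + 1 := by
            rw [norm_smul, Real.norm_eq_abs, hu, mul_one, abs_of_pos ht0]
            linarith
    have hfd : |f (x + t • u) - f (y + t • u)| ≤ L * ‖x - y‖ := by
      have := hL _ hxtu _ hytu
      rwa [show x + t • u - (y + t • u) = x - y by abel] at this
    have hfd2 : |f x - f y| ≤ L * ‖x - y‖ :=
      hL _ (Metric.closedBall_subset_closedBall (by linarith) hx)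
        _ (Metric.closedBall_subset_closedBall (by linarith) hy)
    have habs1 := abs_lt.1 hdx
    have habs2 := abs_lt.1 hdy
    have hdiv : (f (x + t • u) - f x) / t - (f (y + t • u) - f y) / t
        ≤ 2 * (L * ‖x - y‖) / t := by
      rw [div_sub_div_same, div_le_div_iff_of_pos_right ht0]
      have e1 := (abs_le.1 hfd).2
      have e2 := (abs_le.1 hfd2).2
      have e2' := (abs_le.1 hfd2).1
      linarith
    have hbound : 2 * (L * ‖x - y‖) / t < ε / 2 := by
      rw [div_lt_iff₀ ht0]
      have hn0 : (0:ℝ) ≤ ‖x - y‖ := norm_nonneg _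
      have hmul : ‖x - y‖ * (4 * L + 4) < ε * t := by
        have h4 : (0:ℝ) < 4 * L + 4 := by linarith
        calc ‖x - y‖ * (4 * L + 4) < (ε * t / (4 * L + 4)) * (4 * L + 4) := by
              exact mul_lt_mul_of_pos_right hxy h4
          _ = ε * t := by field_simp
      have hexp : ‖x - y‖ * (4 * L + 4) = 4 * (L * ‖x - y‖) + 4 * ‖x - y‖ := by ring
      have hLn : (0:ℝ) ≤ L * ‖x - y‖ := mul_nonneg hL0 hn0
      nlinarith [hmul, hexp, hn0]
    rw [ContinuousLinearMap.sub_apply]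
    linarith [habs1.2, habs2.1, hdiv, hbound]
  exact opNorm_le_of_unit _ (le_of_lt hε) key
end AnalyticHelpers2
section AnalyticHelpers3
variable [NormedAddCommGroup E] [NormedSpace ℝ E]
variable {f : E → ℝ} {gradf : E → E →L[ℝ] ℝ}

omit [NormedSpace ℝ E] in
lemma range_subset_closedBall {x : ℕ → E} (hx : IsBounded (Set.range x)) :
    ∃ r ≥ 0, ∀ n, x n ∈ Metric.closedBall (0:E) r := by
  obtain ⟨r, hr⟩ := (Metric.isBounded_iff_subset_closedBall (0:E)).1 hx
  refine ⟨max r 0, le_max_right _ _, fun n => ?_⟩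
  have := hr (Set.mem_range_self n)
  exact Metric.closedBall_subset_closedBall (le_max_left _ _) this

/-- If two bounded sequences get close, the Bregman distances from a fixed point agree
asymptotically. -/
lemma D_diff_tendsto (hconv : ConvexOn ℝ Set.univ f)
    (hg : ∀ u : E, HasGateauxDerivAt f (gradf u) u) (hbdd : BoundedOnBounded f)
    (hufd : UnifFrechetDiffOnBounded f gradf) (q : E) (x y : ℕ → E)
    (hxb : IsBounded (Set.range x)) (hyb : IsBounded (Set.range y))
    (hdiff : Tendsto (fun n => ‖x n - y n‖) atTop (𝓝 0)) :
    Tendsto (fun n => Df f gradf q (x n) - Df f gradf q (y n)) atTop (𝓝 0) := by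
  obtain ⟨r₁, hr₁0, hr₁⟩ := range_subset_closedBall hxb
  obtain ⟨r₂, hr₂0, hr₂⟩ := range_subset_closedBall hyb
  set r : ℝ := max (max r₁ r₂) ‖q‖ with hr_def
  have hr0 : 0 ≤ r := le_trans hr₁0 ((le_max_left _ _).trans (le_max_left _ _))
  have hxr : ∀ n, x n ∈ Metric.closedBall (0:E) r := fun n =>
    Metric.closedBall_subset_closedBall ((le_max_left r₁ r₂).trans (le_max_left _ _)) (hr₁ n)
  have hyr : ∀ n, y n ∈ Metric.closedBall (0:E) r := fun n =>
    Metric.closedBall_subset_closedBall ((le_max_right r₁ r₂).trans (le_max_left _ _)) (hr₂ n)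
  have hqr : ‖q‖ ≤ r := le_max_right _ _
  obtain ⟨L, hL0, hL⟩ := lipschitz_on_ball hconv hbdd r
  obtain ⟨L₂, hL₂0, hL₂⟩ := grad_bound hconv hg hbdd r
  -- gradient differences tend to zero
  have gtend : Tendsto (fun n => ‖gradf (y n) - gradf (x n)‖) atTop (𝓝 0) := by
    rw [NormedAddCommGroup.tendsto_nhds_zero]
    intro ε hε
    obtain ⟨δ, hδ0, hδ⟩ := grad_unifCont hconv hg hbdd hufd r (ε/2) (by linarith)
    filter_upwards [hdiff.eventually_lt_const hδ0] with n hn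
    rw [norm_norm]
    have : ‖y n - x n‖ < δ := by rwa [norm_sub_rev]
    have := hδ (y n) (hyr n) (x n) (hxr n) this
    linarith
  -- pointwise bound
  have hb : ∀ n, |Df f gradf q (x n) - Df f gradf q (y n)| ≤
      (L + L₂) * ‖x n - y n‖ + (2 * r) * ‖gradf (y n) - gradf (x n)‖ := by
    intro n
    have hsplit : Df f gradf q (x n) - Df f gradf q (y n) =
        (f (y n) - f (x n)) + ((gradf (y n) - gradf (x n)) (q - y n)
          + gradf (x n) (x n - y n)) := by
      simp only [Df, ContinuousLinearMap.sub_apply]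
      have : gradf (x n) (q - x n) = gradf (x n) (q - y n) + gradf (x n) (y n - x n) := by
        rw [← map_add]
        congr 1
        abel
      rw [this]
      have h2 : gradf (x n) (x n - y n) = - gradf (x n) (y n - x n) := by
        rw [← map_neg]
        congr 1
        abel
      rw [h2]
      ring
    rw [hsplit]
    have e1 : |f (y n) - f (x n)| ≤ L * ‖x n - y n‖ := by
      have := hL _ (hyr n) _ (hxr n)
      rwa [norm_sub_rev] at this
    have e2 : |(gradf (y n) - gradf (x n)) (q - y n)| ≤
        ‖gradf (y n) - gradf (x n)‖ * (2 * r) := by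
      calc |(gradf (y n) - gradf (x n)) (q - y n)|
          ≤ ‖gradf (y n) - gradf (x n)‖ * ‖q - y n‖ :=
            (gradf (y n) - gradf (x n)).le_opNorm _
        _ ≤ ‖gradf (y n) - gradf (x n)‖ * (2 * r) := by
            apply mul_le_mul_of_nonneg_left _ (norm_nonneg _)
            have hyn := Metric.mem_closedBall.1 (hyr n)
            rw [dist_zero_right] at hyn
            calc ‖q - y n‖ ≤ ‖q‖ + ‖y n‖ := norm_sub_le _ _
              _ ≤ 2 * r := by linarith
    have e3 : |gradf (x n) (x n - y n)| ≤ L₂ * ‖x n - y n‖ := by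
      calc |gradf (x n) (x n - y n)| ≤ ‖gradf (x n)‖ * ‖x n - y n‖ :=
            (gradf (x n)).le_opNorm _
        _ ≤ L₂ * ‖x n - y n‖ :=
            mul_le_mul_of_nonneg_right (hL₂ _ (hxr n)) (norm_nonneg _)
    calc |(f (y n) - f (x n)) + ((gradf (y n) - gradf (x n)) (q - y n)
          + gradf (x n) (x n - y n))|
        ≤ |f (y n) - f (x n)| + |(gradf (y n) - gradf (x n)) (q - y n)|
          + |gradf (x n) (x n - y n)| := by
          have t1 := abs_add_le (f (y n) - f (x n)) ((gradf (y n) - gradf (x n)) (q - y n)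
            + gradf (x n) (x n - y n))
          have t2 := abs_add_le ((gradf (y n) - gradf (x n)) (q - y n))
            (gradf (x n) (x n - y n))
          linarith
      _ ≤ (L + L₂) * ‖x n - y n‖ + (2 * r) * ‖gradf (y n) - gradf (x n)‖ := by
          have := e1; have := e2; have := e3
          nlinarith [e1, e2, e3]
  have hbt : Tendsto (fun n => (L + L₂) * ‖x n - y n‖
      + (2 * r) * ‖gradf (y n) - gradf (x n)‖) atTop (𝓝 0) := by
    have t1 := hdiff.const_mul (L + L₂)
    have t2 := gtend.const_mul (2 * r)
    simpa using t1.add t2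
  exact squeeze_zero_norm (fun n => by rw [Real.norm_eq_abs]; exact hb n) hbt

/-- `D_f(q, ·)` is bounded above on bounded sets. -/
lemma D_le_of_bounded (hconv : ConvexOn ℝ Set.univ f)
    (hg : ∀ u : E, HasGateauxDerivAt f (gradf u) u) (hbdd : BoundedOnBounded f)
    (q : E) {Y : Set E} (hY : IsBounded Y) : ∃ M, ∀ y ∈ Y, Df f gradf q y ≤ M := by
  obtain ⟨r, hr⟩ := (Metric.isBounded_iff_subset_closedBall (0:E)).1 hY
  set r' : ℝ := max r ‖q‖ with hr'_def
  obtain ⟨M₁, hM₁0, hM₁⟩ := abs_bound_of_bddOnBounded hbdd r'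
  obtain ⟨L, hL0, hL⟩ := grad_bound hconv hg hbdd r'
  refine ⟨|f q| + M₁ + L * (2 * r'), fun y hy => ?_⟩
  have hyr : y ∈ Metric.closedBall (0:E) r' :=
    Metric.closedBall_subset_closedBall (le_max_left _ _) (hr hy)
  have hyn := Metric.mem_closedBall.1 hyr
  rw [dist_zero_right] at hyn
  have hr'0 : 0 ≤ r' := le_trans (norm_nonneg q) (le_max_right _ _)
  have e1 : |f y| ≤ M₁ := hM₁ y hyr
  have e2 : |gradf y (q - y)| ≤ L * (2 * r') := by
    calc |gradf y (q - y)| ≤ ‖gradf y‖ * ‖q - y‖ := (gradf y).le_opNorm _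
      _ ≤ L * (2 * r') := by
          apply mul_le_mul (hL y hyr) _ (norm_nonneg _) hL0
          calc ‖q - y‖ ≤ ‖q‖ + ‖y‖ := norm_sub_le _ _
            _ ≤ 2 * r' := by
                have : ‖q‖ ≤ r' := le_max_right _ _
                linarith
  simp only [Df]
  have := abs_le.1 e1
  have := abs_le.1 e2
  have : f q ≤ |f q| := le_abs_self _
  linarith [(abs_le.1 e1).1, (abs_le.1 e2).1]
end AnalyticHelpers3
section AnalyticHelpers4
variable [NormedAddCommGroup E] [NormedSpace ℝ E]
variable {f : E → ℝ} {gradf : E → E →L[ℝ] ℝ}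

/-- Sets on which `D_f(q, ·)` is bounded above are bounded. -/
lemma isBounded_of_D_le (hconv : ConvexOn ℝ Set.univ f)
    (hg : ∀ u : E, HasGateauxDerivAt f (gradf u) u) (hbdd : BoundedOnBounded f)
    (gradfstar : (E →L[ℝ] ℝ) → E) (hinv₁ : Function.LeftInverse gradfstar gradf)
    (hstarbdd : ∀ s : Set (E →L[ℝ] ℝ), IsBounded s → IsBounded (gradfstar '' s))
    (q : E) (Y : Set E) (M : ℝ) (hM : ∀ y ∈ Y, Df f gradf q y ≤ M) : IsBounded Y := by
  obtain ⟨M₁, hM₁0, hM₁⟩ := abs_bound_of_bddOnBounded hbdd (‖q‖ + 1)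
  have key : ∀ y ∈ Y, ‖gradf y‖ ≤ |M| + 2 * M₁ := by
    intro y hy
    refine opNorm_le_of_unit _ (by positivity) fun u hu => ?_
    have hqu : q + u ∈ Metric.closedBall (0:E) (‖q‖ + 1) := by
      rw [Metric.mem_closedBall, dist_zero_right]
      calc ‖q + u‖ ≤ ‖q‖ + ‖u‖ := norm_add_le _ _
        _ = ‖q‖ + 1 := by rw [hu]
    have hq : q ∈ Metric.closedBall (0:E) (‖q‖ + 1) := by
      rw [Metric.mem_closedBall, dist_zero_right]
      linarith
    have hgi := grad_ineq hconv hg (q + u) y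
    have hsplit : gradf y (q + u - y) = gradf y (q - y) + gradf y u := by
      rw [← map_add]
      congr 1
      abel
    rw [hsplit] at hgi
    have hDy := hM y hy
    simp only [Df] at hDy
    have e1 : |f (q + u)| ≤ M₁ := hM₁ _ hqu
    have e2 : |f q| ≤ M₁ := hM₁ _ hq
    have := abs_le.1 e1
    have := abs_le.1 e2
    have : M ≤ |M| := le_abs_self M
    linarith [(abs_le.1 e1).2, (abs_le.1 e2).1]
  have hsub : Y ⊆ gradfstar '' (gradf '' Y) := by
    intro y hy
    exact ⟨gradf y, Set.mem_image_of_mem _ hy, hinv₁ y⟩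
  have hgb : IsBounded (gradf '' Y) := by
    rw [Metric.isBounded_iff_subset_closedBall (0 : E →L[ℝ] ℝ)]
    exact ⟨|M| + 2 * M₁, fun ψ hψ => by
      obtain ⟨y, hy, rfl⟩ := hψ
      rw [Metric.mem_closedBall, dist_zero_right]
      exact key y hy⟩
  exact (hstarbdd _ hgb).subset hsub

/-- Total convexity: if Bregman distances tend to zero along a bounded second argument,
then the norms tend to zero. -/
lemma tendsto_norm_of_D (hconv : ConvexOn ℝ Set.univ f)
    (hg : ∀ u : E, HasGateauxDerivAt f (gradf u) u)
    (htc : TotallyConvexOnBounded f gradf) (x y : ℕ → E)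
    (hxb : IsBounded (Set.range x))
    (hD : Tendsto (fun n => Df f gradf (y n) (x n)) atTop (𝓝 0)) :
    Tendsto (fun n => ‖y n - x n‖) atTop (𝓝 0) := by
  rw [NormedAddCommGroup.tendsto_nhds_zero]
  intro ε hε
  obtain ⟨c, hc0, hc⟩ := htc (Set.range x) ⟨x 0, Set.mem_range_self 0⟩ hxb ε hε
  filter_upwards [hD.eventually_lt_const hc0] with n hn
  rw [norm_norm]
  by_contra hcon
  push_neg at hcon
  have hεn : ε ≤ ‖y n - x n‖ := hcon
  set s : ℝ := ‖y n - x n‖ with hs_def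
  have hs : 0 < s := lt_of_lt_of_le hε hεn
  set z : E := x n + (ε / s) • (y n - x n) with hz_def
  have hzn : ‖z - x n‖ = ε := by
    rw [hz_def, add_sub_cancel_left, norm_smul, Real.norm_eq_abs,
      abs_of_pos (by positivity), ← hs_def, div_mul_cancel₀ _ hs.ne']
  have hcz : c ≤ Df f gradf z (x n) := hc (x n) (Set.mem_range_self n) z hzn
  have hzconv : z = (1 - ε/s) • x n + (ε/s) • y n := by
    rw [hz_def, smul_sub, sub_smul, one_smul]
    abel
  have hab : (1 - ε/s) + ε/s = 1 := by ring
  have ha : (0:ℝ) ≤ 1 - ε/s := by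
    have : ε/s ≤ 1 := by
      rw [div_le_one hs]
      exact hεn
    linarith
  have hb : (0:ℝ) ≤ ε/s := by positivity
  have hDz : Df f gradf z (x n) ≤ (1 - ε/s) * Df f gradf (x n) (x n)
      + (ε/s) * Df f gradf (y n) (x n) := by
    rw [hzconv]
    exact Df_convex_left hconv ha hb hab _ _ _
  rw [Df_self] at hDz
  have hDnn : 0 ≤ Df f gradf (y n) (x n) := Df_nonneg hconv hg _ _
  have hfrac : (ε/s) * Df f gradf (y n) (x n) ≤ Df f gradf (y n) (x n) := by
    nlinarith
  linarith
end AnalyticHelpers4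

section WeakHelpers
variable [NormedAddCommGroup E] [NormedSpace ℝ E]

/-- Weakly convergent sequences are bounded (uniform boundedness principle). -/
lemma weakTendsto_isBounded [CompleteSpace E] {x : ℕ → E} {p : E}
    (hw : WeakTendsto x p) : IsBounded (Set.range x) := by
  have hpt : ∀ ψ : StrongDual ℝ E, ∃ C, ∀ n,
      ‖NormedSpace.inclusionInDoubleDual ℝ E (x n) ψ‖ ≤ C := by
    intro ψ
    have ht : Tendsto (fun n => ‖ψ (x n)‖) atTop (𝓝 ‖ψ p‖) := (hw ψ).norm
    obtain ⟨C, hC⟩ := ht.bddAbove_range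
    exact ⟨C, fun n => by
      simpa [NormedSpace.dual_def] using hC ⟨n, rfl⟩⟩
  obtain ⟨C', hC'⟩ := banach_steinhaus hpt
  rw [isBounded_iff_forall_norm_le]
  refine ⟨C', fun z hz => ?_⟩
  obtain ⟨n, rfl⟩ := hz
  have h1 := hC' n
  have h2 : ‖x n‖ = ‖NormedSpace.inclusionInDoubleDual ℝ E (x n)‖ :=
    ((NormedSpace.inclusionInDoubleDualLi ℝ (E := E)).norm_map (x n)).symm
  rw [h2]
  exact h1
end WeakHelpers
section FixedHelpers
variable [NormedAddCommGroup E] [NormedSpace ℝ E]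
variable {f : E → ℝ} {gradf : E → E →L[ℝ] ℝ}

/-- Asymptotic fixed points of a map satisfying the Bregman nonexpansivity inequality
are genuine fixed points. -/
lemma afp_fixed (hconv : ConvexOn ℝ Set.univ f)
    (hg : ∀ u : E, HasGateauxDerivAt f (gradf u) u)
    (htc : TotallyConvexOnBounded f gradf) {C : Set E} {S : E → E}
    (h1 : ∀ x ∈ C, ∀ p ∈ AsympFixedPoints C S, Df f gradf p (S x) ≤ Df f gradf p x)
    {p : E} (hp : p ∈ AsympFixedPoints C S) : S p = p := by
  have hpC := hp.1
  have hD : Df f gradf p (S p) ≤ 0 := by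
    have := h1 p hpC p hp
    rwa [Df_self] at this
  by_contra hne
  have ht : 0 < ‖p - S p‖ := norm_pos_iff.2 (sub_ne_zero.2 (Ne.symm hne))
  obtain ⟨c, hc0, hc⟩ := htc {S p} ⟨S p, rfl⟩ (Bornology.isBounded_singleton) _ ht
  have := hc (S p) rfl p rfl
  linarith

/-- The workhorse lemma about partial compositions along a sequence. -/
lemma workhorse (hconv : ConvexOn ℝ Set.univ f)
    (hg : ∀ u : E, HasGateauxDerivAt f (gradf u) u)
    (hbdd : BoundedOnBounded f) (htc : TotallyConvexOnBounded f gradf)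
    (gradfstar : (E →L[ℝ] ℝ) → E) (hinv₁ : Function.LeftInverse gradfstar gradf)
    (hstarbdd : ∀ s : Set (E →L[ℝ] ℝ), IsBounded s → IsBounded (gradfstar '' s))
    {C : Set E} {N : ℕ} {T : Fin N → E → E}
    (hTmaps : ∀ i, Set.MapsTo (T i) C C)
    (hTbsne : ∀ i, BregmanStronglyNonexpansive f gradf C (T i))
    (q : E) (hq : ∀ i, q ∈ AsympFixedPoints C (T i))
    (x : ℕ → E) (hxC : ∀ n, x n ∈ C) (hxb : IsBounded (Set.range x)) :
    (∀ k, (∀ n, compPartial N T k (x n) ∈ C) ∧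
      IsBounded (Set.range fun n => compPartial N T k (x n))) ∧
    (Tendsto (fun n => Df f gradf q (x n) - Df f gradf q (compPartial N T N (x n)))
        atTop (𝓝 0) →
      (∀ k, Tendsto (fun n =>
        ‖compPartial N T k (x n) - compPartial N T (k+1) (x n)‖) atTop (𝓝 0)) ∧
      (∀ k, Tendsto (fun n => ‖compPartial N T k (x n) - x n‖) atTop (𝓝 0)) ∧
      Tendsto (fun n => Df f gradf (x n) (compPartial N T N (x n))) atTop (𝓝 0)) := by
  have hmem : ∀ k, ∀ n, compPartial N T k (x n) ∈ C := by
    intro k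
    induction k with
    | zero => exact hxC
    | succ k ih =>
        intro n
        by_cases h : k < N
        · rw [compPartial_succ_of_lt T h]
          exact hTmaps ⟨k, h⟩ (ih n)
        · have : compPartial N T (k+1) (x n) = compPartial N T k (x n) := by
            simp [compPartial, h]
          rw [this]
          exact ih n
  have hstep : ∀ k n, Df f gradf q (compPartial N T (k+1) (x n))
      ≤ Df f gradf q (compPartial N T k (x n)) := by
    intro k n
    by_cases h : k < N
    · rw [compPartial_succ_of_lt T h]
      exact (hTbsne ⟨k, h⟩).1 _ (hmem k n) q (hq ⟨k, h⟩)
    · have : compPartial N T (k+1) (x n) = compPartial N T k (x n) := by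
        simp [compPartial, h]
      rw [this]
  have hmono : ∀ n, ∀ j k, j ≤ k →
      Df f gradf q (compPartial N T k (x n)) ≤ Df f gradf q (compPartial N T j (x n)) := by
    intro n j k hjk
    induction k, hjk using Nat.le_induction with
    | base => exact le_rfl
    | succ k hjk ih => exact (hstep k n).trans ih
  obtain ⟨M, hM⟩ := D_le_of_bounded hconv hg hbdd q hxb
  have hMx : ∀ n, Df f gradf q (x n) ≤ M := fun n => hM _ (Set.mem_range_self n)
  have hS0 : ∀ n, compPartial N T 0 (x n) = x n := fun n => rfl
  have hbounded : ∀ k, IsBounded (Set.range fun n => compPartial N T k (x n)) := by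
    intro k
    apply isBounded_of_D_le hconv hg hbdd gradfstar hinv₁ hstarbdd q _ M
    rintro y ⟨n, rfl⟩
    have := hmono n 0 k (Nat.zero_le k)
    rw [hS0 n] at this
    exact this.trans (hMx n)
  refine ⟨fun k => ⟨hmem k, hbounded k⟩, fun htend => ?_⟩
  have hDnn : ∀ k n, 0 ≤ Df f gradf q (compPartial N T k (x n)) := fun k n =>
    Df_nonneg hconv hg _ _
  have hgk : ∀ k, Tendsto (fun n => Df f gradf q (compPartial N T k (x n))
      - Df f gradf q (compPartial N T (k+1) (x n))) atTop (𝓝 0) := by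
    intro k
    apply squeeze_zero (fun n => sub_nonneg.2 (hstep k n)) (g := fun n =>
      Df f gradf q (x n) - Df f gradf q (compPartial N T N (x n))) _ htend
    intro n
    beta_reduce
    by_cases h : k < N
    · have h1 : Df f gradf q (compPartial N T k (x n)) ≤ Df f gradf q (x n) := by
        have := hmono n 0 k (Nat.zero_le k)
        rwa [hS0 n] at this
      have h2 : Df f gradf q (compPartial N T N (x n))
          ≤ Df f gradf q (compPartial N T (k+1) (x n)) := hmono n (k+1) N h
      linarith
    · have he : compPartial N T (k+1) (x n) = compPartial N T k (x n) := by
        simp [compPartial, h]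
      rw [he, sub_self]
      have := hmono n 0 N (Nat.zero_le N)
      rw [hS0 n] at this
      linarith
  have hdisp : ∀ k, Tendsto (fun n => Df f gradf (compPartial N T k (x n))
      (compPartial N T (k+1) (x n))) atTop (𝓝 0) := by
    intro k
    by_cases h : k < N
    · have hkey := (hTbsne ⟨k, h⟩).2 (fun n => compPartial N T k (x n)) (hmem k)
        (hbounded k) q (hq ⟨k, h⟩) (by
          have := hgk k
          simp only [compPartial_succ_of_lt T h] at this ⊢
          exact this)
      simp only [compPartial_succ_of_lt T h]
      exact hkey
    · have he : ∀ n, compPartial N T (k+1) (x n) = compPartial N T k (x n) := by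
        intro n; simp [compPartial, h]
      simp only [he, Df_self]
      exact tendsto_const_nhds
  have hnormstep : ∀ k, Tendsto (fun n =>
      ‖compPartial N T k (x n) - compPartial N T (k+1) (x n)‖) atTop (𝓝 0) := by
    intro k
    exact tendsto_norm_of_D hconv hg htc (fun n => compPartial N T (k+1) (x n))
      (fun n => compPartial N T k (x n)) (hbounded (k+1)) (hdisp k)
  have htel : ∀ k, Tendsto (fun n => ‖compPartial N T k (x n) - x n‖) atTop (𝓝 0) := by
    intro k
    induction k with
    | zero => simpa [hS0] using (tendsto_const_nhds : Tendsto (fun _ : ℕ => (0:ℝ)) atTop _)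
    | succ k ih =>
        have hb := (hnormstep k).add ih
        rw [add_zero] at hb
        apply squeeze_zero (fun n => norm_nonneg _) _ hb
        intro n
        calc ‖compPartial N T (k+1) (x n) - x n‖
            = ‖(compPartial N T (k+1) (x n) - compPartial N T k (x n))
              + (compPartial N T k (x n) - x n)‖ := by congr 1; abel
          _ ≤ ‖compPartial N T (k+1) (x n) - compPartial N T k (x n)‖
              + ‖compPartial N T k (x n) - x n‖ := norm_add_le _ _
          _ = ‖compPartial N T k (x n) - compPartial N T (k+1) (x n)‖
              + ‖compPartial N T k (x n) - x n‖ := by rw [norm_sub_rev]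
  refine ⟨hnormstep, htel, ?_⟩
  -- final : Df (x n) (S N (x n)) → 0
  obtain ⟨r₁, hr₁0, hr₁⟩ := range_subset_closedBall hxb
  obtain ⟨r₂, hr₂0, hr₂⟩ := range_subset_closedBall (hbounded N)
  set r : ℝ := max r₁ r₂ with hr_def
  have hxr : ∀ n, x n ∈ Metric.closedBall (0:E) r := fun n =>
    Metric.closedBall_subset_closedBall (le_max_left _ _) (hr₁ n)
  have hyr : ∀ n, compPartial N T N (x n) ∈ Metric.closedBall (0:E) r := fun n =>
    Metric.closedBall_subset_closedBall (le_max_right _ _) (hr₂ n)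
  obtain ⟨L, hL0, hL⟩ := lipschitz_on_ball hconv hbdd r
  obtain ⟨L₂, hL₂0, hL₂⟩ := grad_bound hconv hg hbdd r
  have hbnd : ∀ n, |Df f gradf (x n) (compPartial N T N (x n))|
      ≤ (L + L₂) * ‖compPartial N T N (x n) - x n‖ := by
    intro n
    set y := compPartial N T N (x n)
    have e1 : |f (x n) - f y| ≤ L * ‖x n - y‖ := hL _ (hxr n) _ (hyr n)
    have e2 : |gradf y (x n - y)| ≤ L₂ * ‖x n - y‖ :=
      le_trans ((gradf y).le_opNorm _)
        (mul_le_mul_of_nonneg_right (hL₂ _ (hyr n)) (norm_nonneg _))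
    have habs : |Df f gradf (x n) y| ≤ |f (x n) - f y| + |gradf y (x n - y)| := by
      simp only [Df]
      exact abs_sub _ _
    have hnrev : ‖x n - y‖ = ‖y - x n‖ := norm_sub_rev _ _
    rw [hnrev] at e1 e2
    calc |Df f gradf (x n) y| ≤ |f (x n) - f y| + |gradf y (x n - y)| := habs
      _ ≤ (L + L₂) * ‖y - x n‖ := by linarith
  have hbt : Tendsto (fun n => (L + L₂) * ‖compPartial N T N (x n) - x n‖) atTop (𝓝 0) := by
    have := (htel N).const_mul (L + L₂)
    simpa using this
  exact squeeze_zero_norm (fun n => by rw [Real.norm_eq_abs]; exact hbnd n) hbt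
end FixedHelpers

/-- Let `f` be bounded, uniformly Fréchet differentiable and totally convex
on bounded subsets of a reflexive real Banach space `E`, with `∇f* = (∇f)⁻¹` bounded on
bounded subsets of `E* = dom f*`.  If `T₁,…,T_N : C → C` are Bregman strongly nonexpansive
mappings on a nonempty `C ⊆ E (= int(dom f))` with `⋂ᵢ F̂(Tᵢ) ≠ ∅`, then
`T = T_N ∘ ⋯ ∘ T₁` is Bregman strongly nonexpansive and `F̂(T) = ⋂ᵢ F̂(Tᵢ)`. -/
theorem composition_BSNE
    [NormedAddCommGroup E] [NormedSpace ℝ E] [CompleteSpace E]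
    (hrefl : IsReflexive E)
    (f : E → ℝ) (gradf : E → E →L[ℝ] ℝ)
    (hconv : ConvexOn ℝ Set.univ f)
    (hgateaux : ∀ u : E, HasGateauxDerivAt f (gradf u) u)
    (hbdd : BoundedOnBounded f)
    (hufd : UnifFrechetDiffOnBounded f gradf)
    (htc : TotallyConvexOnBounded f gradf)
    (gradfstar : (E →L[ℝ] ℝ) → E)
    (hinv₁ : Function.LeftInverse gradfstar gradf)
    (hinv₂ : Function.RightInverse gradfstar gradf)
    (hstarbdd : ∀ s : Set (E →L[ℝ] ℝ), IsBounded s → IsBounded (gradfstar '' s))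
    (C : Set E) (hCne : C.Nonempty)
    (N : ℕ) (hN : 0 < N) (T : Fin N → E → E)
    (hTmaps : ∀ i, Set.MapsTo (T i) C C)
    (hTbsne : ∀ i, BregmanStronglyNonexpansive f gradf C (T i))
    (hTafix : (⋂ i, AsympFixedPoints C (T i)).Nonempty)
    (Tc : E → E) (hTc : Tc = fun v => Fin.foldl N (fun w i => T i w) v) :
    BregmanStronglyNonexpansive f gradf C Tc ∧
      AsympFixedPoints C Tc = ⋂ i, AsympFixedPoints C (T i) := by
  have hTc' : ∀ v, Tc v = compPartial N T N v := by
    intro v; rw [hTc]; exact foldl_eq_compPartial T v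
  have hfix : ∀ (i : Fin N) (p : E), p ∈ AsympFixedPoints C (T i) → T i p = p :=
    fun i p hp => afp_fixed hconv hgateaux htc (hTbsne i).1 hp
  have hmemS : ∀ k, ∀ v ∈ C, compPartial N T k v ∈ C := by
    intro k
    induction k with
    | zero => exact fun v hv => hv
    | succ k ih =>
        intro v hv
        by_cases h : k < N
        · rw [compPartial_succ_of_lt T h]
          exact hTmaps ⟨k, h⟩ (ih v hv)
        · have : compPartial N T (k+1) v = compPartial N T k v := by
            simp [compPartial, h]
          rw [this]
          exact ih v hv
  -- F̂(Tc) ⊆ ⋂ F̂(Tᵢ)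
  have hsub1 : AsympFixedPoints C Tc ⊆ ⋂ i, AsympFixedPoints C (T i) := by
    intro p hp
    obtain ⟨hpC, x, hxC, hxw, hxd⟩ := hp
    have hxb : IsBounded (Set.range x) := weakTendsto_isBounded hxw
    obtain ⟨q, hq⟩ := hTafix
    rw [Set.mem_iInter] at hq
    have hW := workhorse hconv hgateaux hbdd htc gradfstar hinv₁ hstarbdd
      hTmaps hTbsne q hq x hxC hxb
    have hSNb : IsBounded (Set.range fun n => compPartial N T N (x n)) := (hW.1 N).2
    have hxd' : Tendsto (fun n => ‖x n - compPartial N T N (x n)‖) atTop (𝓝 0) := by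
      simpa only [hTc'] using hxd
    have htend := D_diff_tendsto hconv hgateaux hbdd hufd q x
      (fun n => compPartial N T N (x n)) hxb hSNb hxd'
    obtain ⟨hstepn, hteln, -⟩ := hW.2 htend
    rw [Set.mem_iInter]
    intro i
    refine ⟨hpC, fun n => compPartial N T i.1 (x n), (hW.1 i.1).1, ?_, ?_⟩
    · intro ψ
      have h1 := hxw ψ
      have h2 : Tendsto (fun n => ψ (compPartial N T i.1 (x n)) - ψ (x n)) atTop (𝓝 0) := by
        have hb := (hteln i.1).const_mul ‖ψ‖
        rw [mul_zero] at hb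
        apply squeeze_zero_norm _ hb
        intro n
        have : ψ (compPartial N T i.1 (x n)) - ψ (x n)
            = ψ (compPartial N T i.1 (x n) - x n) := by rw [map_sub]
        rw [this]
        exact le_trans (ψ.le_opNorm _) le_rfl
      have := h1.add h2
      rw [add_zero] at this
      refine this.congr fun n => by ring
    · have hh := hstepn i.1
      have heq : ∀ n : ℕ, compPartial N T (i.1+1) (x n)
          = T i (compPartial N T i.1 (x n)) := by
        intro n
        rw [compPartial_succ_of_lt T i.isLt, Fin.eta]
      simp only [heq] at hh
      exact hh
  -- ⋂ F̂(Tᵢ) ⊆ F̂(Tc)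
  have hsub2 : (⋂ i, AsympFixedPoints C (T i)) ⊆ AsympFixedPoints C Tc := by
    intro p hp
    rw [Set.mem_iInter] at hp
    have hpC : p ∈ C := (hp ⟨0, hN⟩).1
    have hSk : ∀ k, compPartial N T k p = p := by
      intro k
      induction k with
      | zero => rfl
      | succ k ih =>
          by_cases h : k < N
          · rw [compPartial_succ_of_lt T h, ih]
            exact hfix ⟨k, h⟩ p (hp ⟨k, h⟩)
          · have : compPartial N T (k+1) p = compPartial N T k p := by
              simp [compPartial, h]
            rw [this, ih]
    have hTcp : Tc p = p := by rw [hTc' p, hSk N]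
    exact ⟨hpC, fun _ => p, fun _ => hpC, fun ψ => tendsto_const_nhds, by
      simp [hTcp]⟩
  have hEq : AsympFixedPoints C Tc = ⋂ i, AsympFixedPoints C (T i) :=
    Set.Subset.antisymm hsub1 hsub2
  refine ⟨⟨?_, ?_⟩, hEq⟩
  · -- nonexpansivity of the composition
    intro x hx p hp
    rw [hEq, Set.mem_iInter] at hp
    have hchain : ∀ k, Df f gradf p (compPartial N T k x) ≤ Df f gradf p x := by
      intro k
      induction k with
      | zero => exact le_rfl
      | succ k ih =>
          by_cases h : k < N
          · rw [compPartial_succ_of_lt T h]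
            exact le_trans ((hTbsne ⟨k, h⟩).1 _ (hmemS k x hx) p (hp ⟨k, h⟩)) ih
          · have : compPartial N T (k+1) x = compPartial N T k x := by
              simp [compPartial, h]
            rw [this]
            exact ih
    rw [hTc' x]
    exact hchain N
  · -- the limit criterion
    intro x hxC hxb p hp htend
    rw [hEq, Set.mem_iInter] at hp
    have hW := workhorse hconv hgateaux hbdd htc gradfstar hinv₁ hstarbdd
      hTmaps hTbsne p hp x hxC hxb
    have htend' : Tendsto (fun n => Df f gradf p (x n)
        - Df f gradf p (compPartial N T N (x n))) atTop (𝓝 0) := by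
      simpa only [hTc'] using htend
    have hfin := (hW.2 htend').2.2
    simpa only [hTc'] using hfin
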